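/- Let $p^\beta$ be an odd prime power with $p$ odd. Then $2\sum_{h=1}^{(p^\beta-1)/2} \left(\sin\frac{\pi h}{p^\beta}\right)^{-1} \le p^\beta \ln p^\beta$. -/

import Mathlib

open Real intervalIntegral

lemma inv_le_log_tel (h : ℕ) (hh : 1 ≤ h) :
    ((h:ℝ))⁻¹ ≤ Real.log (2*h+1) - Real.log (2*h-1) := by
  have h1 : (1:ℝ) ≤ h := by exact_mod_cast hh
  have ha : (0:ℝ) < 2*h-1 := by linarith
  have hb : (0:ℝ) < 2*h+1 := by linarith
  rw [← Real.log_div hb.ne' ha.ne', ← integral_inv_of_pos ha hb]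
  have key : ∫ x in (2*(h:ℝ)-1)..(2*(h:ℝ)+1),
      ((2*(h:ℝ))⁻¹ - (x - 2*h)/(4*h^2)) ≤ ∫ x in (2*(h:ℝ)-1)..(2*(h:ℝ)+1), x⁻¹ := by
    apply intervalIntegral.integral_mono_on (by linarith)
    · exact (Continuous.intervalIntegrable (by continuity) _ _)
    · apply intervalIntegrable_inv
      · intro x hx
        rw [Set.uIcc_of_le (by linarith)] at hx
        have := hx.1; intro hc; rw [hc] at this; linarith
      · exact continuousOn_id
    · intro x hx
      have hx1 : 2*(h:ℝ)-1 ≤ x := hx.1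
      have hx2 : x ≤ 2*(h:ℝ)+1 := hx.2
      have hxp : 0 < x := by linarith
      rw [← sub_nonneg]
      have hxinv : x⁻¹ = 1/x := by rw [inv_eq_one_div]
      have hrw : x⁻¹ - ((2*(h:ℝ))⁻¹ - (x - 2*h)/(4*h^2)) = (x - 2*h)^2 / (4*h^2*x) := by
        field_simp
        ring
      rw [hrw]
      positivity
  calc ((h:ℝ))⁻¹ = ∫ x in (2*(h:ℝ)-1)..(2*(h:ℝ)+1),
      ((2*(h:ℝ))⁻¹ - (x - 2*h)/(4*h^2)) := by
        rw [intervalIntegral.integral_sub ((Continuous.intervalIntegrable (by continuity) _ _)) ((Continuous.intervalIntegrable (by continuity) _ _))]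
        simp [intervalIntegral.integral_div, integral_id]
        field_simp
        ring
    _ ≤ _ := key

theorem stmt_4 (p β : ℕ) (hp : p.Prime) (hodd : Odd p) (hβ : 1 ≤ β) :
    2 * ∑ h ∈ Finset.Icc 1 ((p ^ β - 1) / 2), (Real.sin (Real.pi * h / (p ^ β : ℝ)))⁻¹ ≤
      (p ^ β : ℝ) * Real.log (p ^ β : ℝ) := by
  have hp3 : 3 ≤ p := by
    have h2 := hp.two_le
    have hne : p ≠ 2 := by rintro rfl; exact (by decide : ¬ Odd 2) hodd
    omega
  have hq3 : 3 ≤ p ^ β := le_trans hp3 (Nat.le_self_pow (by omega) p)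
  have hqodd : Odd (p ^ β) := hodd.pow
  set q : ℕ := p ^ β with hqdef
  set H : ℕ := (q - 1) / 2 with hHdef
  have h2H : 2 * H + 1 = q := by
    obtain ⟨k, hk⟩ := hqodd; omega
  have hqR : (0:ℝ) < (q:ℝ) := by positivity
  have hqcast : ((q:ℕ):ℝ) = (p:ℝ) ^ β := by push_cast [hqdef]; ring
  -- termwise bound
  have step1 : ∀ h ∈ Finset.Icc 1 H, (Real.sin (Real.pi * h / (q:ℝ)))⁻¹ ≤ (q:ℝ)/(2*h) := by
    intro h hh
    rw [Finset.mem_Icc] at hh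
    have hh1 : (1:ℝ) ≤ (h:ℝ) := by exact_mod_cast hh.1
    have hhq : (2*(h:ℝ)) ≤ (q:ℝ) - 1 := by
      have : 2*h ≤ q - 1 := by omega
      have := (Nat.cast_le (α := ℝ)).2 this
      push_cast at this
      have hq1 : (1:ℝ) ≤ (q:ℝ) := by exact_mod_cast (by omega : 1 ≤ q)
      calc 2*(h:ℝ) = ((2*h:ℕ):ℝ) := by push_cast; ring
        _ ≤ ((q-1:ℕ):ℝ) := by exact_mod_cast (Nat.cast_le (α := ℝ)).2 (by omega : 2*h ≤ q-1)
        _ ≤ (q:ℝ) - 1 := by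
            rw [Nat.cast_sub (by omega)]; push_cast; linarith
    have hx0 : 0 ≤ Real.pi * h / (q:ℝ) := by positivity
    have hxpi : Real.pi * h / (q:ℝ) ≤ Real.pi / 2 := by
      rw [div_le_div_iff₀ hqR (by norm_num)]
      nlinarith [Real.pi_pos]
    have hsin := Real.mul_le_sin hx0 hxpi
    have hlhs : 2 / Real.pi * (Real.pi * h / (q:ℝ)) = 2*(h:ℝ)/(q:ℝ) := by
      field_simp
    rw [hlhs] at hsin
    have hpos : 0 < 2*(h:ℝ)/(q:ℝ) := by positivity
    have := inv_anti₀ hpos hsin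
    rwa [inv_div] at this
  have step2 : ∀ h ∈ Finset.Icc 1 H, ((h:ℝ))⁻¹ ≤ Real.log (2*h+1) - Real.log (2*h-1) := by
    intro h hh
    rw [Finset.mem_Icc] at hh
    exact inv_le_log_tel h hh.1
  have tel : ∑ h ∈ Finset.Icc 1 H, (Real.log (2*(h:ℝ)+1) - Real.log (2*(h:ℝ)-1))
      = Real.log (q:ℝ) := by
    rw [← Finset.Ico_add_one_right_eq_Icc, Finset.sum_Ico_eq_sum_range]
    simp only [Nat.add_sub_cancel]
    have hfun : ∀ i ∈ Finset.range H,
        Real.log (2*((1+i:ℕ):ℝ)+1) - Real.log (2*((1+i:ℕ):ℝ)-1)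
        = (fun n : ℕ => Real.log (2*(n:ℝ)+1)) (i+1) - (fun n : ℕ => Real.log (2*(n:ℝ)+1)) i := by
      intro i _
      simp only
      congr 1 <;> [skip; congr 1] <;> push_cast <;> ring
    rw [Finset.sum_congr rfl hfun, Finset.sum_range_sub (fun n : ℕ => Real.log (2*(n:ℝ)+1)) H]
    have : 2*((H:ℕ):ℝ)+1 = (q:ℝ) := by
      have := h2H
      push_cast [← this]
      ring
    rw [this]
    norm_num
  rw [show ((p:ℝ))^β = (q:ℝ) from hqcast.symm]
  calc 2 * ∑ h ∈ Finset.Icc 1 H, (Real.sin (Real.pi * h / (q:ℝ)))⁻¹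
      ≤ 2 * ∑ h ∈ Finset.Icc 1 H, (q:ℝ)/(2*h) := by
        have := Finset.sum_le_sum step1
        linarith
    _ = (q:ℝ) * ∑ h ∈ Finset.Icc 1 H, ((h:ℝ))⁻¹ := by
        rw [Finset.mul_sum, Finset.mul_sum]
        apply Finset.sum_congr rfl
        intro h hh
        rw [Finset.mem_Icc] at hh
        have : (0:ℝ) < h := by exact_mod_cast hh.1
        field_simp
    _ ≤ (q:ℝ) * ∑ h ∈ Finset.Icc 1 H, (Real.log (2*(h:ℝ)+1) - Real.log (2*(h:ℝ)-1)) := by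
        apply mul_le_mul_of_nonneg_left (Finset.sum_le_sum step2) (le_of_lt hqR)
    _ = (q:ℝ) * Real.log (q:ℝ) := by rw [tel]
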